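/- G(Σ, e) is the internal direct sum B₀ ⊕ B₁ ⊕ ⋯ ⊕ B_{2^ν−1}, where: B₀ := ⟨Ψ_𝔰⟩ for any fixed 𝔰 ∈ Σ₂ is cyclic of order m; for 1 ≤ k ≤ 2^{ν−1}, B_{2k−1} := ⟨v_{2k−1}⟩ with v_{2k−1} := Ψ_{t_{2k−1}} − Ψ_{t_{2k}} is cyclic of order 3; and for 1 ≤ k ≤ 2^{ν−1} − 1, B_{2k} := ⟨v_{2k}⟩ with v_{2k} := Ψ_{t_{2k−1}} + Ψ_{t_{2k}} − Ψ_t − Ψ_{t'} is cyclic of order 3. In particular G(Σ, e) is isomorphic to ℤ/mℤ ⊕ (ℤ/3ℤ)^{2^ν−1}. -/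

import Mathlib

/-- The subgroup of relations: `e s • ψ s - e t • ψ t` for all `s t`, together with
`∑ s, ψ s`. -/
noncomputable def relSub {S : Type*} [Fintype S] (e : S → ℤ) : AddSubgroup (S →₀ ℤ) :=
  AddSubgroup.closure
    ({x | ∃ s t : S, x = Finsupp.single s (e s) - Finsupp.single t (e t)} ∪
      {∑ s : S, Finsupp.single s 1})

/-- `G(Σ, e)`: the quotient of the free abelian group on `Σ` by the relations. -/
abbrev CompGrp {S : Type*} [Fintype S] (e : S → ℤ) : Type _ :=
  (S →₀ ℤ) ⧸ relSub e

/-- `Ψ s`: the image of the basis element `ψ s` in `G(Σ, e)`. -/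
noncomputable def Psi {S : Type*} [Fintype S] (e : S → ℤ) (s : S) : CompGrp e :=
  QuotientAddGroup.mk (Finsupp.single s 1)

/-- `Σ = Σ₂ ⊔ Σ₆` with `#Σ₂ = s₂` and `#Σ₆ = 2^ν`. -/
abbrev Sig2 (s₂ ν : ℕ) : Type := Fin s₂ ⊕ Fin (2 ^ ν)

/-- `e ≡ 1` on `Σ₂` and `e ≡ 3` on `Σ₆`. -/
def e2 (s₂ ν : ℕ) : Sig2 s₂ ν → ℤ := Sum.elim (fun _ => 1) (fun _ => 3)

/-- `t i` (`1`-based): the `i`-th point of `Σ₆ = {t_1, …, t_{2^ν}}`. -/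
def tPt (s₂ ν : ℕ) (i : ℕ) : Sig2 s₂ ν :=
  Sum.inr ⟨(i - 1) % 2 ^ ν, Nat.mod_lt _ (Nat.pow_pos (by norm_num))⟩

/-- The generators `v_j` (`1`-based, `v_0 := Ψ 𝔰`):
`v_{2k-1} = Ψ t_{2k-1} - Ψ t_{2k}` and `v_{2k} = Ψ t_{2k-1} + Ψ t_{2k} - Ψ t - Ψ t'`,
where `t = t_{2^ν - 1}` and `t' = t_{2^ν}`. -/
noncomputable def vGen (s₂ ν : ℕ) (𝔰 : Fin s₂) : ℕ → CompGrp (e2 s₂ ν) := fun j =>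
  if j = 0 then Psi (e2 s₂ ν) (Sum.inl 𝔰)
  else if j % 2 = 1 then
    Psi (e2 s₂ ν) (tPt s₂ ν j) - Psi (e2 s₂ ν) (tPt s₂ ν (j + 1))
  else
    Psi (e2 s₂ ν) (tPt s₂ ν (j - 1)) + Psi (e2 s₂ ν) (tPt s₂ ν j)
      - Psi (e2 s₂ ν) (tPt s₂ ν (2 ^ ν - 1)) - Psi (e2 s₂ ν) (tPt s₂ ν (2 ^ ν))

-- AUX development
namespace Stmt2Aux

variable (s₂ ν : ℕ)

abbrev Tgt (s₂ ν : ℕ) : Type := ZMod (3 * s₂ + 2 ^ ν) × (Fin (2 ^ ν - 1) → ZMod 3)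

def bv (ν : ℕ) (i : Fin (2 ^ ν)) : Fin (2 ^ ν - 1) → ZMod 3 := fun j =>
  (if (i : ℕ) = (j : ℕ) then 1 else 0) - (if (i : ℕ) = 2 ^ ν - 1 then 1 else 0)

noncomputable def pv : Sig2 s₂ ν → Tgt s₂ ν :=
  Sum.elim (fun _ => ((3 : ZMod (3 * s₂ + 2 ^ ν)), 0)) (fun i => (1, bv ν i))

noncomputable def phi : (Sig2 s₂ ν →₀ ℤ) →+ Tgt s₂ ν :=
  Finsupp.liftAddHom (fun s => zmultiplesHom _ (pv s₂ ν s))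

lemma phi_single (s : Sig2 s₂ ν) (k : ℤ) :
    phi s₂ ν (Finsupp.single s k) = k • pv s₂ ν s := by
  simp [phi]

lemma ind_sum (c : ℕ) (hc : c < 2 ^ ν) :
    ∑ i : Fin (2 ^ ν), (if (i : ℕ) = c then (1 : ZMod 3) else 0) = 1 := by
  have h : ∀ i : Fin (2 ^ ν), ((i : ℕ) = c) = (i = ⟨c, hc⟩) := by
    intro i; rw [Fin.ext_iff]
  simp_rw [h]
  simp

lemma esmul (s : Sig2 s₂ ν) : (e2 s₂ ν s) • pv s₂ ν s = ((3 : ZMod (3 * s₂ + 2 ^ ν)), 0) := by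
  cases s with
  | inl a => simp [pv, e2]
  | inr i =>
    have h3 : ((3 : ℤ) : ZMod 3) = 0 := by decide
    simp only [pv, e2, Sum.elim_inr, Prod.smul_mk]
    refine Prod.ext ?_ ?_
    · show (3 : ℤ) • (1 : ZMod (3 * s₂ + 2 ^ ν)) = 3
      rw [zsmul_eq_mul]; push_cast; ring
    · show (3 : ℤ) • bv ν i = 0
      funext j
      rw [Pi.smul_apply, zsmul_eq_mul, h3, zero_mul]; rfl

lemma pv_sum : ∑ s : Sig2 s₂ ν, pv s₂ ν s = 0 := by
  have hL : 1 ≤ 2 ^ ν := Nat.one_le_two_pow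
  refine Prod.ext ?_ ?_
  · rw [Prod.fst_sum, Fintype.sum_sum_type]
    simp only [pv, Sum.elim_inl, Sum.elim_inr, Finset.sum_const, Finset.card_univ,
      Fintype.card_fin, nsmul_eq_mul, mul_one, Prod.fst_zero]
    have h0 : ((3 * s₂ + 2 ^ ν : ℕ) : ZMod (3 * s₂ + 2 ^ ν)) = 0 := ZMod.natCast_self _
    push_cast at h0 ⊢
    linear_combination h0
  · rw [Prod.snd_sum, Fintype.sum_sum_type]
    simp only [pv, Sum.elim_inl, Sum.elim_inr, Finset.sum_const, Finset.card_univ,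
      Fintype.card_fin, smul_zero, Prod.snd_zero, zero_add]
    funext j
    rw [Finset.sum_apply]
    unfold bv
    rw [Finset.sum_sub_distrib, ind_sum ν j (by omega), ind_sum ν (2 ^ ν - 1) (by omega)]
    simp

lemma mem_rel_pair (s t : Sig2 s₂ ν) :
    Finsupp.single s (e2 s₂ ν s) - Finsupp.single t (e2 s₂ ν t) ∈ relSub (e2 s₂ ν) :=
  AddSubgroup.subset_closure (Or.inl ⟨s, t, rfl⟩)

lemma mem_rel_sum : (∑ s : Sig2 s₂ ν, Finsupp.single s (1 : ℤ)) ∈ relSub (e2 s₂ ν) :=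
  AddSubgroup.subset_closure (Or.inr rfl)

lemma rel_le_ker : relSub (e2 s₂ ν) ≤ (phi s₂ ν).ker := by
  rw [relSub, AddSubgroup.closure_le]
  rintro x (⟨s, t, rfl⟩ | rfl)
  · simp only [SetLike.mem_coe, AddMonoidHom.mem_ker, map_sub, phi_single, esmul, sub_self]
  · simp only [SetLike.mem_coe, AddMonoidHom.mem_ker, map_sum]
    simp_rw [phi_single, one_smul]
    exact pv_sum s₂ ν

noncomputable def phibar : CompGrp (e2 s₂ ν) →+ Tgt s₂ ν :=
  QuotientAddGroup.lift _ (phi s₂ ν) (fun x hx => rel_le_ker s₂ ν hx)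

lemma phibar_Psi (s : Sig2 s₂ ν) : phibar s₂ ν (Psi (e2 s₂ ν) s) = pv s₂ ν s := by
  show phi s₂ ν (Finsupp.single s 1) = pv s₂ ν s
  rw [phi_single, one_smul]

lemma rel1 (s t : Sig2 s₂ ν) :
    (e2 s₂ ν s) • Psi (e2 s₂ ν) s = (e2 s₂ ν t) • Psi (e2 s₂ ν) t := by
  have key : ∀ u : Sig2 s₂ ν, (e2 s₂ ν u) • Psi (e2 s₂ ν) u
      = QuotientAddGroup.mk' (relSub (e2 s₂ ν)) (Finsupp.single u (e2 s₂ ν u)) := by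
    intro u
    rw [show Finsupp.single u (e2 s₂ ν u) = (e2 s₂ ν u) • Finsupp.single u (1 : ℤ) by
      rw [Finsupp.smul_single, smul_eq_mul, mul_one], map_zsmul]
    rfl
  rw [key s, key t, QuotientAddGroup.mk'_eq_mk']
  exact ⟨-(Finsupp.single s (e2 s₂ ν s) - Finsupp.single t (e2 s₂ ν t)),
    neg_mem (mem_rel_pair s₂ ν s t), by abel⟩

lemma relsum : ∑ s : Sig2 s₂ ν, Psi (e2 s₂ ν) s = 0 := by
  have h : (QuotientAddGroup.mk' (relSub (e2 s₂ ν))) (∑ s : Sig2 s₂ ν, Finsupp.single s (1 : ℤ))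
      = 0 := (QuotientAddGroup.eq_zero_iff _).mpr (mem_rel_sum s₂ ν)
  rw [map_sum] at h
  exact h

noncomputable def Wi (i : Fin (2 ^ ν)) : CompGrp (e2 s₂ ν) := Psi (e2 s₂ ν) (Sum.inr i)

lemma rel2 (𝔰 : Fin s₂) (i : Fin (2 ^ ν)) :
    (3 : ℤ) • Wi s₂ ν i = Psi (e2 s₂ ν) (Sum.inl 𝔰) := by
  have := rel1 s₂ ν (Sum.inr i) (Sum.inl 𝔰)
  exact this.trans (one_zsmul _)

lemma relinl (a b : Fin s₂) : Psi (e2 s₂ ν) (Sum.inl a) = Psi (e2 s₂ ν) (Sum.inl b) := by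
  have := rel1 s₂ ν (Sum.inl a) (Sum.inl b)
  exact (one_zsmul _).symm.trans (this.trans (one_zsmul _))

lemma tPt_eq (j : ℕ) (h1 : 1 ≤ j) (h2 : j ≤ 2 ^ ν) :
    tPt s₂ ν j = Sum.inr ⟨j - 1, by omega⟩ := by
  unfold tPt
  exact congrArg Sum.inr (Fin.ext (Nat.mod_eq_of_lt (by omega)))

lemma vGen_zero (𝔰 : Fin s₂) : vGen s₂ ν 𝔰 0 = Psi (e2 s₂ ν) (Sum.inl 𝔰) := by
  simp [vGen]

lemma vGen_odd (𝔰 : Fin s₂) (j : ℕ) (ho : j % 2 = 1) (hj : j < 2 ^ ν) :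
    vGen s₂ ν 𝔰 j = Wi s₂ ν ⟨j - 1, by omega⟩ - Wi s₂ ν ⟨j, hj⟩ := by
  have hj0 : j ≠ 0 := by omega
  show (if j = 0 then _ else if j % 2 = 1 then _ else _) = _
  rw [if_neg hj0, if_pos ho, tPt_eq s₂ ν j (by omega) (by omega),
    tPt_eq s₂ ν (j + 1) (by omega) (by omega)]
  rfl

lemma vGen_even (𝔰 : Fin s₂) (j : ℕ) (he : j % 2 = 0) (h1 : 1 ≤ j) (hj : j < 2 ^ ν)
    (hν : 1 ≤ ν) :
    vGen s₂ ν 𝔰 j = Wi s₂ ν ⟨j - 2, by omega⟩ + Wi s₂ ν ⟨j - 1, by omega⟩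
      - Wi s₂ ν ⟨2 ^ ν - 2, by omega⟩ - Wi s₂ ν ⟨2 ^ ν - 1, by omega⟩ := by
  have h2L : 2 ≤ 2 ^ ν := by
    calc 2 = 2 ^ 1 := rfl
    _ ≤ 2 ^ ν := Nat.pow_le_pow_right (by norm_num) hν
  have hj2 : 2 ≤ j := by omega
  show (if j = 0 then _ else if j % 2 = 1 then _ else _) = _
  rw [if_neg (by omega : j ≠ 0), if_neg (by omega : ¬ j % 2 = 1),
    tPt_eq s₂ ν (j - 1) (by omega) (by omega), tPt_eq s₂ ν j (by omega) (by omega),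
    tPt_eq s₂ ν (2 ^ ν - 1) (by omega) (by omega), tPt_eq s₂ ν (2 ^ ν) (by omega) (by omega)]
  show Wi s₂ ν ⟨j - 1 - 1, _⟩ + Wi s₂ ν ⟨j - 1, _⟩ - Wi s₂ ν ⟨2 ^ ν - 1 - 1, _⟩
      - Wi s₂ ν ⟨2 ^ ν - 1, _⟩ = _
  congr 4 <;> exact Fin.ext (by simp)

lemma sumW (𝔰 : Fin s₂) :
    (s₂ : ℤ) • Psi (e2 s₂ ν) (Sum.inl 𝔰) + ∑ i : Fin (2 ^ ν), Wi s₂ ν i = 0 := by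
  have h := relsum s₂ ν
  rw [Fintype.sum_sum_type,
    Finset.sum_congr rfl (fun a _ => relinl s₂ ν a 𝔰)] at h
  simp only [Finset.sum_const, Finset.card_univ, Fintype.card_fin] at h
  rw [← natCast_zsmul (Psi (e2 s₂ ν) (Sum.inl 𝔰)) s₂] at h
  exact h

lemma mA (𝔰 : Fin s₂) : (3 * s₂ + 2 ^ ν) • Psi (e2 s₂ ν) (Sum.inl 𝔰) = 0 := by
  set A := Psi (e2 s₂ ν) (Sum.inl 𝔰) with hA
  have h1 := sumW s₂ ν 𝔰
  have h3 : (3 : ℤ) • ∑ i : Fin (2 ^ ν), Wi s₂ ν i = ((2 ^ ν : ℕ) : ℤ) • A := by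
    rw [Finset.smul_sum, Finset.sum_congr rfl (fun i _ => rel2 s₂ ν 𝔰 i), Finset.sum_const,
      Finset.card_univ, Fintype.card_fin, natCast_zsmul]
  have key : (((3 * s₂ + 2 ^ ν : ℕ)) : ℤ) • A
      = (3 : ℤ) • ((s₂ : ℤ) • A + ∑ i : Fin (2 ^ ν), Wi s₂ ν i) := by
    rw [zsmul_add, h3]
    push_cast
    module
  rw [← natCast_zsmul A (3 * s₂ + 2 ^ ν), key, h1, smul_zero]

lemma nz3 (x : CompGrp (e2 s₂ ν)) : (3 : ℕ) • x = (3 : ℤ) • x := by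
  rw [← natCast_zsmul x 3]
  norm_num

lemma three_v (𝔰 : Fin s₂) (j : ℕ) (h1 : 1 ≤ j) (h2 : j ≤ 2 ^ ν - 1) (hν : 1 ≤ ν) :
    (3 : ℕ) • vGen s₂ ν 𝔰 j = 0 := by
  have hL : 1 ≤ 2 ^ ν := Nat.one_le_two_pow
  rw [nz3]
  rcases Nat.mod_two_eq_zero_or_one j with he | ho
  · rw [vGen_even s₂ ν 𝔰 j he h1 (by omega) hν]
    rw [zsmul_sub, zsmul_sub, zsmul_add, rel2 s₂ ν 𝔰, rel2 s₂ ν 𝔰, rel2 s₂ ν 𝔰, rel2 s₂ ν 𝔰]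
    abel
  · rw [vGen_odd s₂ ν 𝔰 j ho (by omega)]
    rw [zsmul_sub, rel2 s₂ ν 𝔰, rel2 s₂ ν 𝔰, sub_self]

lemma phibar_Wi (i : Fin (2 ^ ν)) : phibar s₂ ν (Wi s₂ ν i) = (1, bv ν i) := by
  rw [Wi, phibar_Psi]
  rfl

lemma phibar_A (𝔰 : Fin s₂) :
    phibar s₂ ν (Psi (e2 s₂ ν) (Sum.inl 𝔰)) = ((3 : ZMod (3 * s₂ + 2 ^ ν)), 0) := by
  rw [phibar_Psi]
  rfl

lemma v_ne_zero (𝔰 : Fin s₂) (j : ℕ) (h1 : 1 ≤ j) (h2 : j ≤ 2 ^ ν - 1) (hν : 1 ≤ ν) :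
    vGen s₂ ν 𝔰 j ≠ 0 := by
  have hL : 1 ≤ 2 ^ ν := Nat.one_le_two_pow
  intro h0
  rcases Nat.mod_two_eq_zero_or_one j with he | ho
  · -- even case: j ≥ 2, coordinate j - 2
    have hj2 : 2 ≤ j := by omega
    have hc : (phibar s₂ ν (vGen s₂ ν 𝔰 j)).2 ⟨j - 2, by omega⟩ = 0 := by
      rw [h0]; simp
    rw [vGen_even s₂ ν 𝔰 j he h1 (by omega) hν, map_sub, map_sub, map_add,
      phibar_Wi, phibar_Wi, phibar_Wi, phibar_Wi] at hc
    simp only [Prod.snd_sub, Prod.snd_add, Pi.sub_apply, Pi.add_apply] at hc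
    unfold bv at hc
    rw [if_pos rfl, if_neg (by omega : ¬ (j - 2 = 2 ^ ν - 1)),
      if_neg (by omega : ¬ (j - 1 = j - 2)), if_neg (by omega : ¬ (j - 1 = 2 ^ ν - 1)),
      if_neg (by omega : ¬ (2 ^ ν - 2 = j - 2)), if_neg (by omega : ¬ (2 ^ ν - 2 = 2 ^ ν - 1)),
      if_neg (by omega : ¬ (2 ^ ν - 1 = j - 2)), if_pos rfl] at hc
    exact absurd hc (by simp only [sub_zero, zero_sub, sub_neg_eq_add, add_zero, sub_self, zero_add]; decide)
  · -- odd case: coordinate j - 1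
    have hc : (phibar s₂ ν (vGen s₂ ν 𝔰 j)).2 ⟨j - 1, by omega⟩ = 0 := by
      rw [h0]; simp
    rw [vGen_odd s₂ ν 𝔰 j ho (by omega), map_sub, phibar_Wi, phibar_Wi] at hc
    simp only [Prod.snd_sub, Pi.sub_apply] at hc
    unfold bv at hc
    rw [if_pos rfl, if_neg (by omega : ¬ (j - 1 = 2 ^ ν - 1)),
      if_neg (by omega : ¬ (j = j - 1))] at hc
    by_cases hj : j = 2 ^ ν - 1
    · rw [if_pos hj] at hc
      exact absurd hc (by simp only [sub_zero, zero_sub, sub_neg_eq_add, add_zero, sub_self, zero_add]; decide)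
    · rw [if_neg hj] at hc
      exact absurd hc (by simp only [sub_zero, zero_sub, sub_neg_eq_add, add_zero, sub_self, zero_add]; decide)

lemma cop3 : Nat.Coprime (3 * s₂ + 2 ^ ν) 3 := by
  have h2 : ¬ (3 ∣ 2 ^ ν) := by
    intro h
    have := Nat.Prime.dvd_of_dvd_pow Nat.prime_three h
    omega
  have h3 : ¬ (3 ∣ 3 * s₂ + 2 ^ ν) := by omega
  exact Nat.coprime_comm.mp ((Nat.Prime.coprime_iff_not_dvd Nat.prime_three).mpr h3)

lemma order_A (hs : 1 ≤ s₂) (𝔰 : Fin s₂) :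
    addOrderOf (Psi (e2 s₂ ν) (Sum.inl 𝔰)) = 3 * s₂ + 2 ^ ν := by
  have hL : 1 ≤ 2 ^ ν := Nat.one_le_two_pow
  have hm0 : 3 * s₂ + 2 ^ ν ≠ 0 := by omega
  have hdvd1 : addOrderOf (Psi (e2 s₂ ν) (Sum.inl 𝔰)) ∣ 3 * s₂ + 2 ^ ν :=
    addOrderOf_dvd_of_nsmul_eq_zero (mA s₂ ν 𝔰)
  have h2 : addOrderOf (phibar s₂ ν (Psi (e2 s₂ ν) (Sum.inl 𝔰)))
      ∣ addOrderOf (Psi (e2 s₂ ν) (Sum.inl 𝔰)) := addOrderOf_map_dvd _ _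
  rw [phibar_A] at h2
  have hinj : Function.Injective
      (AddMonoidHom.inl (ZMod (3 * s₂ + 2 ^ ν)) (Fin (2 ^ ν - 1) → ZMod 3)) :=
    fun a b hab => by simpa using congrArg Prod.fst hab
  have h4 : addOrderOf (((3 : ZMod (3 * s₂ + 2 ^ ν)), (0 : Fin (2 ^ ν - 1) → ZMod 3)))
      = 3 * s₂ + 2 ^ ν := by
    have h5 := addOrderOf_injective _ hinj (3 : ZMod (3 * s₂ + 2 ^ ν))
    rw [show (AddMonoidHom.inl (ZMod (3 * s₂ + 2 ^ ν)) (Fin (2 ^ ν - 1) → ZMod 3))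
        (3 : ZMod (3 * s₂ + 2 ^ ν)) = ((3 : ZMod (3 * s₂ + 2 ^ ν)), 0) from rfl] at h5
    rw [h5, show (3 : ZMod (3 * s₂ + 2 ^ ν)) = ((3 : ℕ) : ZMod (3 * s₂ + 2 ^ ν)) by push_cast; rfl,
      ZMod.addOrderOf_coe 3 hm0, cop3 s₂ ν, Nat.div_one]
  rw [h4] at h2
  exact Nat.dvd_antisymm hdvd1 h2

lemma order_v (𝔰 : Fin s₂) (j : ℕ) (h1 : 1 ≤ j) (h2 : j ≤ 2 ^ ν - 1) (hν : 1 ≤ ν) :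
    addOrderOf (vGen s₂ ν 𝔰 j) = 3 := by
  have hdvd : addOrderOf (vGen s₂ ν 𝔰 j) ∣ 3 :=
    addOrderOf_dvd_of_nsmul_eq_zero (three_v s₂ ν 𝔰 j h1 h2 hν)
  rcases (Nat.prime_three).eq_one_or_self_of_dvd _ hdvd with h | h
  · exact absurd (AddMonoid.addOrderOf_eq_one_iff.mp h) (v_ne_zero s₂ ν 𝔰 j h1 h2 hν)
  · exact h

lemma bv_last (hν : 1 ≤ ν) :
    bv ν ⟨2 ^ ν - 1, by have := Nat.one_le_two_pow (n := ν); omega⟩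
      = fun _ => (-1 : ZMod 3) := by
  funext j
  have hj := j.isLt
  show (if 2 ^ ν - 1 = (j : ℕ) then (1 : ZMod 3) else 0)
      - (if 2 ^ ν - 1 = 2 ^ ν - 1 then (1 : ZMod 3) else 0) = -1
  rw [if_neg (by omega), if_pos rfl, zero_sub]

lemma bv_sum2 : ∑ i : Fin (2 ^ ν), bv ν i = 0 := by
  have hL : 1 ≤ 2 ^ ν := Nat.one_le_two_pow
  funext j
  rw [Finset.sum_apply]
  unfold bv
  rw [Finset.sum_sub_distrib, ind_sum ν j (by omega), ind_sum ν (2 ^ ν - 1) (by omega)]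
  simp

lemma phibar_surj (hs : 1 ≤ s₂) (hν : 1 ≤ ν) : Function.Surjective (phibar s₂ ν) := by
  have hL : 1 ≤ 2 ^ ν := Nat.one_le_two_pow
  haveI : NeZero (3 * s₂ + 2 ^ ν) := ⟨by omega⟩
  set R := (phibar s₂ ν).range with hR
  set lastI : Fin (2 ^ ν) := ⟨2 ^ ν - 1, by omega⟩ with hlastI
  have hW : ∀ i : Fin (2 ^ ν), ((1 : ZMod (3 * s₂ + 2 ^ ν)), bv ν i) ∈ R :=
    fun i => ⟨Wi s₂ ν i, phibar_Wi s₂ ν i⟩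
  have hdiff : ∀ i : Fin (2 ^ ν), ((0 : ZMod (3 * s₂ + 2 ^ ν)), bv ν i - bv ν lastI) ∈ R := by
    intro i
    have h := sub_mem (hW i) (hW lastI)
    rwa [Prod.mk_sub_mk, sub_self] at h
  have hLone : ((0 : ZMod (3 * s₂ + 2 ^ ν)),
      (2 ^ ν : ℕ) • (fun _ => (1 : ZMod 3) : Fin (2 ^ ν - 1) → ZMod 3)) ∈ R := by
    have h := AddSubgroup.sum_mem R (fun i (_ : i ∈ Finset.univ) => hdiff i)
    have he : ∑ i : Fin (2 ^ ν), (((0 : ZMod (3 * s₂ + 2 ^ ν)), bv ν i - bv ν lastI) : Tgt s₂ ν)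
        = ((0 : ZMod (3 * s₂ + 2 ^ ν)),
            (2 ^ ν : ℕ) • (fun _ => (1 : ZMod 3) : Fin (2 ^ ν - 1) → ZMod 3)) := by
      refine Prod.ext ?_ ?_
      · rw [Prod.fst_sum]
        simp
      · rw [Prod.snd_sum]
        show ∑ i : Fin (2 ^ ν), (bv ν i - bv ν lastI) = _
        rw [Finset.sum_sub_distrib, bv_sum2, Finset.sum_const, Finset.card_univ,
          Fintype.card_fin, bv_last ν hν, zero_sub]
        funext k
        simp
    rwa [he] at h
  have hone : ((0 : ZMod (3 * s₂ + 2 ^ ν)), (fun _ => (1 : ZMod 3) : Fin (2 ^ ν - 1) → ZMod 3))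
      ∈ R := by
    have h := AddSubgroup.nsmul_mem R hLone (2 ^ ν)
    have he : (2 ^ ν) • (((0 : ZMod (3 * s₂ + 2 ^ ν)),
        (2 ^ ν : ℕ) • (fun _ => (1 : ZMod 3) : Fin (2 ^ ν - 1) → ZMod 3)) : Tgt s₂ ν)
        = ((0 : ZMod (3 * s₂ + 2 ^ ν)),
            (fun _ => (1 : ZMod 3) : Fin (2 ^ ν - 1) → ZMod 3)) := by
      rw [Prod.smul_mk, smul_zero]
      congr 1
      rw [smul_smul]
      funext k
      rw [Pi.smul_apply, nsmul_eq_mul]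
      have hc : ((2 ^ ν * 2 ^ ν : ℕ) : ZMod 3) = 1 := by
        rw [show 2 ^ ν * 2 ^ ν = 4 ^ ν by rw [show (4 : ℕ) = 2 ^ 2 by norm_num, ← pow_mul,
          two_mul, pow_add]]
        push_cast
        rw [show (4 : ZMod 3) = 1 by decide, one_pow]
      rw [hc, mul_one]
    rwa [he] at h
  have hbvmem : ∀ i : Fin (2 ^ ν), ((0 : ZMod (3 * s₂ + 2 ^ ν)), bv ν i) ∈ R := by
    intro i
    have h := sub_mem (hdiff i) hone
    have he : (((0 : ZMod (3 * s₂ + 2 ^ ν)), bv ν i - bv ν lastI) : Tgt s₂ ν)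
        - ((0 : ZMod (3 * s₂ + 2 ^ ν)), (fun _ => (1 : ZMod 3) : Fin (2 ^ ν - 1) → ZMod 3))
        = ((0 : ZMod (3 * s₂ + 2 ^ ν)), bv ν i) := by
      rw [Prod.mk_sub_mk, sub_zero, bv_last ν hν]
      refine Prod.ext rfl ?_
      funext k
      simp
    rwa [he] at h
  have h10 : ((1 : ZMod (3 * s₂ + 2 ^ ν)), (0 : Fin (2 ^ ν - 1) → ZMod 3)) ∈ R := by
    have h := sub_mem (hW lastI) (hbvmem lastI)
    rwa [Prod.mk_sub_mk, sub_self, sub_zero] at h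
  intro x
  obtain ⟨a, f⟩ := x
  show ((a, f) : Tgt s₂ ν) ∈ R
  have hrepr : ((a, f) : Tgt s₂ ν)
      = (ZMod.val a) • (((1 : ZMod (3 * s₂ + 2 ^ ν)), (0 : Fin (2 ^ ν - 1) → ZMod 3)) : Tgt s₂ ν)
        + ∑ j : Fin (2 ^ ν - 1), (ZMod.val (f j)) • (((0 : ZMod (3 * s₂ + 2 ^ ν)),
            bv ν ⟨(j : ℕ), lt_of_lt_of_le j.isLt (Nat.sub_le _ _)⟩) : Tgt s₂ ν) := by
    refine Prod.ext ?_ ?_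
    · rw [Prod.fst_add, Prod.fst_sum]
      simp [Prod.smul_fst, ZMod.natCast_val, ZMod.cast_id, nsmul_eq_mul]
    · rw [Prod.snd_add, Prod.snd_sum]
      simp only [Prod.smul_snd, smul_zero, zero_add]
      funext k
      rw [Finset.sum_apply]
      have hterm : ∀ j : Fin (2 ^ ν - 1),
          ((ZMod.val (f j)) • bv ν ⟨(j : ℕ), lt_of_lt_of_le j.isLt (Nat.sub_le _ _)⟩) k
            = if j = k then (ZMod.val (f j)) • (1 : ZMod 3) else 0 := by
        intro j
        have hj := j.isLt
        rw [Pi.smul_apply]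
        show (ZMod.val (f j)) • ((if (j : ℕ) = (k : ℕ) then (1 : ZMod 3) else 0)
          - (if (j : ℕ) = 2 ^ ν - 1 then (1 : ZMod 3) else 0)) = _
        rw [if_neg (show ¬((j : ℕ) = 2 ^ ν - 1) by omega), sub_zero]
        by_cases hjk : j = k
        · rw [if_pos (show (j : ℕ) = (k : ℕ) by rw [hjk]), if_pos hjk]
        · rw [if_neg (fun h => hjk (Fin.ext h)), if_neg hjk, smul_zero]
      rw [Finset.sum_congr rfl (fun j _ => hterm j),
        Finset.sum_ite_eq' Finset.univ k (fun j => ZMod.val (f j) • (1 : ZMod 3))]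
      simp [ZMod.natCast_val, ZMod.cast_id, nsmul_eq_mul]
  rw [hrepr]
  exact add_mem (AddSubgroup.nsmul_mem R h10 _)
    (AddSubgroup.sum_mem R (fun j _ => AddSubgroup.nsmul_mem R (hbvmem _) _))

lemma Wi_eq (a b : ℕ) (ha : a < 2 ^ ν) (hb : b < 2 ^ ν) (h : a = b) :
    Wi s₂ ν ⟨a, ha⟩ = Wi s₂ ν ⟨b, hb⟩ := by
  subst h
  rfl

lemma gen_mem (hs : 1 ≤ s₂) (hν : 1 ≤ ν) (𝔰 : Fin s₂) (g : CompGrp (e2 s₂ ν)) :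
    g ∈ AddMonoidHom.range (G := DirectSum (Fin (2 ^ ν)) fun i : Fin (2 ^ ν) =>
      AddSubgroup.zmultiples (vGen s₂ ν 𝔰 i.val)) (DirectSum.coeAddMonoidHom
      (fun i : Fin (2 ^ ν) => AddSubgroup.zmultiples (vGen s₂ ν 𝔰 i.val))) := by
  have hL : 1 ≤ 2 ^ ν := Nat.one_le_two_pow
  have h2L : 2 ≤ 2 ^ ν := by
    calc 2 = 2 ^ 1 := rfl
    _ ≤ 2 ^ ν := Nat.pow_le_pow_right (by norm_num) hν
  have h2dvd : 2 ∣ 2 ^ ν := dvd_pow_self 2 (by omega)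
  set Rng := AddMonoidHom.range (G := DirectSum (Fin (2 ^ ν)) fun i : Fin (2 ^ ν) =>
      AddSubgroup.zmultiples (vGen s₂ ν 𝔰 i.val)) (DirectSum.coeAddMonoidHom
      (fun i : Fin (2 ^ ν) => AddSubgroup.zmultiples (vGen s₂ ν 𝔰 i.val))) with hRng
  have hv : ∀ i : Fin (2 ^ ν), vGen s₂ ν 𝔰 i.val ∈ Rng := fun i =>
    ⟨DirectSum.of (fun i : Fin (2 ^ ν) => AddSubgroup.zmultiples (vGen s₂ ν 𝔰 i.val)) i
        ⟨vGen s₂ ν 𝔰 i.val, AddSubgroup.mem_zmultiples _⟩,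
      DirectSum.coeAddMonoidHom_of _ _ _⟩
  have hv' : ∀ jv : ℕ, jv < 2 ^ ν → vGen s₂ ν 𝔰 jv ∈ Rng := fun jv h => hv ⟨jv, h⟩
  have hlast : 2 ^ ν - 1 < 2 ^ ν := by omega
  have hA : Psi (e2 s₂ ν) (Sum.inl 𝔰) ∈ Rng := by
    have := hv ⟨0, by omega⟩
    rwa [vGen_zero] at this
  have hdeven : ∀ ii : Fin (2 ^ ν), ii.val % 2 = 0 → ii.val < 2 ^ ν - 2 →
      Wi s₂ ν ii - Wi s₂ ν (⟨2 ^ ν - 1, hlast⟩ : Fin (2 ^ ν)) ∈ Rng := by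
    rintro ⟨jv, hjlt⟩ hp hlt
    simp only at hp hlt
    have hvsum : vGen s₂ ν 𝔰 (jv + 1) + vGen s₂ ν 𝔰 (jv + 2) + vGen s₂ ν 𝔰 (2 ^ ν - 1)
        = (2 : ℤ) • (Wi s₂ ν ⟨jv, hjlt⟩ - Wi s₂ ν (⟨2 ^ ν - 1, hlast⟩ : Fin (2 ^ ν))) := by
      rw [vGen_odd s₂ ν 𝔰 (jv + 1) (by omega) (by omega),
        vGen_even s₂ ν 𝔰 (jv + 2) (by omega) (by omega) (by omega) hν,
        vGen_odd s₂ ν 𝔰 (2 ^ ν - 1) (by omega) (by omega),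
        Wi_eq s₂ ν (jv + 1 - 1) jv (by omega) hjlt (by omega),
        Wi_eq s₂ ν (jv + 2 - 2) jv (by omega) hjlt (by omega),
        Wi_eq s₂ ν (jv + 2 - 1) (jv + 1) (by omega) (by omega) (by omega),
        Wi_eq s₂ ν (2 ^ ν - 1 - 1) (2 ^ ν - 2) (by omega) (by omega) (by omega)]
      abel
    have h3d : (3 : ℤ) • (Wi s₂ ν ⟨jv, hjlt⟩
        - Wi s₂ ν (⟨2 ^ ν - 1, hlast⟩ : Fin (2 ^ ν))) = 0 := by
      rw [zsmul_sub, rel2 s₂ ν 𝔰, rel2 s₂ ν 𝔰, sub_self]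
    have hdj : Wi s₂ ν ⟨jv, hjlt⟩ - Wi s₂ ν (⟨2 ^ ν - 1, hlast⟩ : Fin (2 ^ ν))
        = -(vGen s₂ ν 𝔰 (jv + 1) + vGen s₂ ν 𝔰 (jv + 2) + vGen s₂ ν 𝔰 (2 ^ ν - 1)) := by
      apply eq_neg_of_add_eq_zero_left
      rw [hvsum, ← h3d]
      abel
    rw [hdj]
    exact neg_mem (add_mem (add_mem (hv' (jv + 1) (by omega)) (hv' (jv + 2) (by omega)))
      (hv' (2 ^ ν - 1) (by omega)))
  have hd : ∀ i : Fin (2 ^ ν), Wi s₂ ν i - Wi s₂ ν (⟨2 ^ ν - 1, hlast⟩ : Fin (2 ^ ν)) ∈ Rng := by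
    intro i
    have hiLt := i.isLt
    rcases Nat.mod_two_eq_zero_or_one i.val with hp | hp
    · by_cases hi : i.val < 2 ^ ν - 2
      · exact hdeven i hp hi
      · have hval : i.val = 2 ^ ν - 2 := by omega
        have hvo := vGen_odd s₂ ν 𝔰 (2 ^ ν - 1) (by omega) (by omega)
        rw [Wi_eq s₂ ν (2 ^ ν - 1 - 1) (2 ^ ν - 2) (by omega) (by omega) (by omega)] at hvo
        have he : Wi s₂ ν i - Wi s₂ ν (⟨2 ^ ν - 1, hlast⟩ : Fin (2 ^ ν))
            = vGen s₂ ν 𝔰 (2 ^ ν - 1) := by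
          rw [hvo]
          congr 1
          exact congrArg (Wi s₂ ν) (Fin.ext hval)
        rw [he]
        exact hv' _ (by omega)
    · by_cases hi : i.val = 2 ^ ν - 1
      · have he : i = (⟨2 ^ ν - 1, hlast⟩ : Fin (2 ^ ν)) := Fin.ext hi
        rw [he, sub_self]
        exact zero_mem _
      · have hlt : i.val < 2 ^ ν - 2 := by omega
        have hprev := hdeven ⟨i.val - 1, by omega⟩ (by simp only; omega) (by simp only; omega)
        have hvo := vGen_odd s₂ ν 𝔰 i.val hp i.isLt
        have he : Wi s₂ ν i - Wi s₂ ν (⟨2 ^ ν - 1, hlast⟩ : Fin (2 ^ ν))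
            = (Wi s₂ ν ⟨i.val - 1, by omega⟩ - Wi s₂ ν (⟨2 ^ ν - 1, hlast⟩ : Fin (2 ^ ν)))
              - vGen s₂ ν 𝔰 i.val := by
          rw [hvo, show (⟨i.val, i.isLt⟩ : Fin (2 ^ ν)) = i from Fin.ext rfl]
          abel
        rw [he]
        exact sub_mem hprev (hv' _ i.isLt)
  have hD : ∑ i : Fin (2 ^ ν), (Wi s₂ ν i - Wi s₂ ν (⟨2 ^ ν - 1, hlast⟩ : Fin (2 ^ ν))) ∈ Rng :=
    AddSubgroup.sum_mem _ (fun i _ => hd i)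
  have hmW : ((3 * s₂ + 2 ^ ν : ℕ) : ℤ) • Wi s₂ ν (⟨2 ^ ν - 1, hlast⟩ : Fin (2 ^ ν))
      + ∑ i : Fin (2 ^ ν), (Wi s₂ ν i - Wi s₂ ν (⟨2 ^ ν - 1, hlast⟩ : Fin (2 ^ ν))) = 0 := by
    have hS := sumW s₂ ν 𝔰
    have hsum' : ∑ i : Fin (2 ^ ν), Wi s₂ ν i
        = -((s₂ : ℤ) • Psi (e2 s₂ ν) (Sum.inl 𝔰)) := eq_neg_of_add_eq_zero_right hS
    have hA3 : (3 : ℤ) • Wi s₂ ν (⟨2 ^ ν - 1, hlast⟩ : Fin (2 ^ ν)) = Psi (e2 s₂ ν) (Sum.inl 𝔰) := rel2 s₂ ν 𝔰 (⟨2 ^ ν - 1, hlast⟩ : Fin (2 ^ ν))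
    rw [Finset.sum_sub_distrib, Finset.sum_const, Finset.card_univ, Fintype.card_fin,
      ← natCast_zsmul (Wi s₂ ν (⟨2 ^ ν - 1, hlast⟩ : Fin (2 ^ ν))) (2 ^ ν), hsum', ← hA3]
    push_cast
    module
  have hmWlast : ((3 * s₂ + 2 ^ ν : ℕ) : ℤ) • Wi s₂ ν (⟨2 ^ ν - 1, hlast⟩ : Fin (2 ^ ν)) ∈ Rng := by
    rw [eq_neg_of_add_eq_zero_left hmW]
    exact neg_mem hD
  have hb := Nat.gcd_eq_gcd_ab (3 * s₂ + 2 ^ ν) 3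
  rw [show Nat.gcd (3 * s₂ + 2 ^ ν) 3 = 1 from cop3 s₂ ν] at hb
  have hrw : Wi s₂ ν (⟨2 ^ ν - 1, hlast⟩ : Fin (2 ^ ν))
      = Nat.gcdA (3 * s₂ + 2 ^ ν) 3 • (((3 * s₂ + 2 ^ ν : ℕ) : ℤ) • Wi s₂ ν (⟨2 ^ ν - 1, hlast⟩ : Fin (2 ^ ν)))
        + Nat.gcdB (3 * s₂ + 2 ^ ν) 3 • ((3 : ℤ) • Wi s₂ ν (⟨2 ^ ν - 1, hlast⟩ : Fin (2 ^ ν))) := by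
    rw [smul_smul, smul_smul, ← add_zsmul]
    nth_rewrite 1 [← one_zsmul (Wi s₂ ν (⟨2 ^ ν - 1, hlast⟩ : Fin (2 ^ ν)))]
    congr 1
    push_cast at hb ⊢
    linarith [hb]
  have hWlast : Wi s₂ ν (⟨2 ^ ν - 1, hlast⟩ : Fin (2 ^ ν)) ∈ Rng := by
    rw [hrw]
    exact add_mem (AddSubgroup.zsmul_mem _ hmWlast _)
      (AddSubgroup.zsmul_mem _ (by rw [rel2 s₂ ν 𝔰 (⟨2 ^ ν - 1, hlast⟩ : Fin (2 ^ ν))]; exact hA) _)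
  have hWi : ∀ i : Fin (2 ^ ν), Wi s₂ ν i ∈ Rng := by
    intro i
    have h := add_mem (hd i) hWlast
    rwa [sub_add_cancel] at h
  have hPsi : ∀ s : Sig2 s₂ ν, Psi (e2 s₂ ν) s ∈ Rng := by
    rintro (a | i)
    · rw [relinl s₂ ν a 𝔰]
      exact hA
    · exact hWi i
  refine QuotientAddGroup.induction_on g ?_
  intro x
  induction x using Finsupp.induction_linear with
  | zero =>
    show ((0 : Sig2 s₂ ν →₀ ℤ) : CompGrp (e2 s₂ ν)) ∈ Rng
    rw [show ((0 : Sig2 s₂ ν →₀ ℤ) : CompGrp (e2 s₂ ν)) = 0 from rfl]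
    exact zero_mem _
  | add f g hf hg =>
    show ((f + g : Sig2 s₂ ν →₀ ℤ) : CompGrp (e2 s₂ ν)) ∈ Rng
    rw [show ((f + g : Sig2 s₂ ν →₀ ℤ) : CompGrp (e2 s₂ ν))
      = (f : CompGrp (e2 s₂ ν)) + (g : CompGrp (e2 s₂ ν)) from rfl]
    exact add_mem hf hg
  | single a b =>
    have he : ((Finsupp.single a b : Sig2 s₂ ν →₀ ℤ) : CompGrp (e2 s₂ ν))
        = b • Psi (e2 s₂ ν) a := by
      rw [show Finsupp.single a b = b • Finsupp.single a (1 : ℤ) by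
        rw [Finsupp.smul_single, smul_eq_mul, mul_one]]
      exact map_zsmul (QuotientAddGroup.mk' (relSub (e2 s₂ ν))) b _
    rw [he]
    exact AddSubgroup.zsmul_mem _ (hPsi a) b

end Stmt2Aux

/-- `G(Σ, e)` is the internal direct sum `B₀ ⊕ B₁ ⊕ ⋯ ⊕ B_{2^ν - 1}`,
where `B₀ = ⟨Ψ 𝔰⟩` (any fixed `𝔰 ∈ Σ₂`) is cyclic of order `m = 3 s₂ + 2^ν` and each
`B_i = ⟨v_i⟩` (`1 ≤ i ≤ 2^ν - 1`) is cyclic of order `3`; in particular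
`G(Σ, e) ≃ ℤ/mℤ ⊕ (ℤ/3ℤ)^{2^ν - 1}`. -/
theorem stmt2 (s₂ ν : ℕ) (hs : 1 ≤ s₂) (hν : 1 ≤ ν) (𝔰 : Fin s₂) :
    DirectSum.IsInternal
      (fun i : Fin (2 ^ ν) => AddSubgroup.zmultiples (vGen s₂ ν 𝔰 i.val)) ∧
    addOrderOf (vGen s₂ ν 𝔰 0) = 3 * s₂ + 2 ^ ν ∧
    (∀ i : ℕ, 1 ≤ i → i ≤ 2 ^ ν - 1 → addOrderOf (vGen s₂ ν 𝔰 i) = 3) ∧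
    Nonempty (CompGrp (e2 s₂ ν) ≃+
      ZMod (3 * s₂ + 2 ^ ν) × (Fin (2 ^ ν - 1) → ZMod 3)) := by
  classical
  open Stmt2Aux in
  have hL : 1 ≤ 2 ^ ν := Nat.one_le_two_pow
  haveI : NeZero (3 * s₂ + 2 ^ ν) := ⟨by omega⟩
  set A : Fin (2 ^ ν) → AddSubgroup (CompGrp (e2 s₂ ν)) :=
    fun i => AddSubgroup.zmultiples (vGen s₂ ν 𝔰 i.val) with hA
  have horder0 : addOrderOf (vGen s₂ ν 𝔰 0) = 3 * s₂ + 2 ^ ν := by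
    rw [Stmt2Aux.vGen_zero]
    exact Stmt2Aux.order_A s₂ ν hs 𝔰
  have horderv : ∀ i : ℕ, 1 ≤ i → i ≤ 2 ^ ν - 1 → addOrderOf (vGen s₂ ν 𝔰 i) = 3 :=
    fun i h1 h2 => Stmt2Aux.order_v s₂ ν 𝔰 i h1 h2 hν
  haveI hfin : ∀ i : Fin (2 ^ ν), Finite (A i) := by
    intro i
    have hord : 0 < addOrderOf (vGen s₂ ν 𝔰 i.val) := by
      rcases Nat.eq_zero_or_pos i.val with h0 | hpos
      · rw [h0, horder0]; omega
      · rw [horderv i.val hpos (by have := i.isLt; omega)]; omega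
    have hfo : IsOfFinAddOrder (vGen s₂ ν 𝔰 i.val) := addOrderOf_pos_iff.mp hord
    exact Set.Finite.to_subtype (finite_zmultiples.mpr hfo)
  have eqv : (DirectSum (Fin (2 ^ ν)) fun i => A i) ≃ (∀ i, A i) :=
    (DirectSum.addEquivProd fun i => A i).toEquiv
  haveI : Finite (DirectSum (Fin (2 ^ ν)) fun i => A i) := Finite.of_equiv _ eqv.symm
  have cardDS : Nat.card (DirectSum (Fin (2 ^ ν)) fun i => A i)
      = (3 * s₂ + 2 ^ ν) * 3 ^ (2 ^ ν - 1) := by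
    rw [Nat.card_congr eqv, Nat.card_pi]
    have hcardA : ∀ i : Fin (2 ^ ν), Nat.card (A i) = addOrderOf (vGen s₂ ν 𝔰 i.val) :=
      fun i => Nat.card_zmultiples _
    rw [Finset.prod_congr rfl (fun i _ => hcardA i),
      Fintype.prod_eq_mul_prod_compl (⟨0, by omega⟩ : Fin (2 ^ ν))]
    have h0 : addOrderOf (vGen s₂ ν 𝔰 ((⟨0, by omega⟩ : Fin (2 ^ ν))).val)
        = 3 * s₂ + 2 ^ ν := horder0
    have hprod : ∀ i ∈ ({(⟨0, by omega⟩ : Fin (2 ^ ν))}ᶜ : Finset (Fin (2 ^ ν))),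
        addOrderOf (vGen s₂ ν 𝔰 i.val) = 3 := by
      intro i hi
      have hne : i ≠ ⟨0, by omega⟩ := by simpa using hi
      have h1 : 1 ≤ i.val := by
        rcases Nat.eq_zero_or_pos i.val with h0' | h
        · exact absurd (Fin.ext h0') hne
        · exact h
      exact horderv i.val h1 (by have := i.isLt; omega)
    have hprodeq : ∏ i ∈ ({(⟨0, by omega⟩ : Fin (2 ^ ν))}ᶜ : Finset (Fin (2 ^ ν))),
        addOrderOf (vGen s₂ ν 𝔰 i.val) = 3 ^ (2 ^ ν - 1) := by
      rw [Finset.prod_congr rfl hprod, Finset.prod_const, Finset.card_compl,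
        Finset.card_singleton, Fintype.card_fin]
    exact congrArg₂ HMul.hMul h0 hprodeq
  have cardT : Nat.card (Stmt2Aux.Tgt s₂ ν) = (3 * s₂ + 2 ^ ν) * 3 ^ (2 ^ ν - 1) := by
    rw [Nat.card_prod, Nat.card_zmod, Nat.card_pi]
    simp only [Nat.card_zmod]
    rw [Finset.prod_const, Finset.card_univ, Fintype.card_fin]
  have hsurjDS : Function.Surjective (DirectSum.coeAddMonoidHom A) := fun g =>
    AddMonoidHom.mem_range.mp (Stmt2Aux.gen_mem s₂ ν hs hν 𝔰 g)
  haveI : Finite (CompGrp (e2 s₂ ν)) := Finite.of_surjective _ hsurjDS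
  have hsurjphi := Stmt2Aux.phibar_surj s₂ ν hs hν
  have hcard1 : Nat.card (CompGrp (e2 s₂ ν)) ≤ (3 * s₂ + 2 ^ ν) * 3 ^ (2 ^ ν - 1) :=
    cardDS ▸ Nat.card_le_card_of_surjective _ hsurjDS
  have hcard2 : (3 * s₂ + 2 ^ ν) * 3 ^ (2 ^ ν - 1) ≤ Nat.card (CompGrp (e2 s₂ ν)) :=
    cardT ▸ Nat.card_le_card_of_surjective _ hsurjphi
  have hcardG : Nat.card (CompGrp (e2 s₂ ν)) = (3 * s₂ + 2 ^ ν) * 3 ^ (2 ^ ν - 1) :=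
    le_antisymm hcard1 hcard2
  have hbijDS : Function.Bijective (DirectSum.coeAddMonoidHom A) :=
    (Nat.bijective_iff_surjective_and_card _).mpr ⟨hsurjDS, by rw [cardDS, hcardG]⟩
  have hbijphi : Function.Bijective (Stmt2Aux.phibar s₂ ν) :=
    (Nat.bijective_iff_surjective_and_card _).mpr ⟨hsurjphi, by rw [hcardG, cardT]⟩
  exact ⟨hbijDS, horder0, horderv, ⟨AddEquiv.ofBijective (Stmt2Aux.phibar s₂ ν) hbijphi⟩⟩
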